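/- arXiv:1401.5446 — 2 statements merged into one kernel-verified Lean document; each statement's English description precedes it below -/
import Mathlib

section
/- Let K ≥ 1 and let a₁ < a₂ < … < a_{2K} be real numbers. For all complex μ and λ with Re μ < 0 < Re λ, the following telescoping identity holds: ∑_{j,k=1}^{2K} (−1)^{j+k+1} (1/(2π)) ∫_{−∞}^{∞} e^{iy(a_j − a_k)} e^{μ a_k − λ a_j} / ((μ − iy)(iy − λ)) dy = (1/(μ − λ)) ∑_{j=1}^{2K} (−1)^{j+1} e^{(μ − λ) a_j}. (This is the residue computation and cancellation underlying the composed kernel H̃_k H_j of the tacnode Riemann–Hilbert analysis.) -/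
open MeasureTheory Complex Set Filter Topology FourierTransform Real Finset

noncomputable section

lemma integrableOn_cexp_Ioi {c : ℂ} (hc : c.re < 0) :
    IntegrableOn (fun x : ℝ => Complex.exp (c * x)) (Ioi (0:ℝ)) := by
  have h := exp_neg_integrableOn_Ioi 0 (b := -c.re) (by linarith)
  refine (h.mono' ?_ ?_)
  · exact (Complex.continuous_exp.comp (by continuity)).aestronglyMeasurable.restrict
  · filter_upwards with x
    simp only [Complex.norm_exp, Complex.mul_re, Complex.ofReal_re,
      Complex.ofReal_im, mul_zero, sub_zero, neg_mul]
    exact le_of_eq (by ring_nf)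

lemma hasDerivAt_cexp_div (c : ℂ) (hc0 : c ≠ 0) (x : ℝ) :
    HasDerivAt (fun y : ℝ => Complex.exp (c * y) / c) (Complex.exp (c * x)) x := by
  have h1 : HasDerivAt (fun y : ℝ => ((y : ℂ))) 1 x := hasDerivAt_id (x:ℝ) |>.ofReal_comp
  have h2 : HasDerivAt (fun y : ℝ => c * (y : ℂ)) c x := by simpa using h1.const_mul c
  have h3 : HasDerivAt (fun y : ℝ => Complex.exp (c * y)) (Complex.exp (c * x) * c) x :=
    (Complex.hasDerivAt_exp (c * x)).comp x h2
  simpa [mul_div_cancel_right₀ _ hc0] using h3.div_const c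

lemma tendsto_cexp_atTop {c : ℂ} (hc : c.re < 0) :
    Tendsto (fun x : ℝ => Complex.exp (c * x)) atTop (𝓝 0) := by
  rw [tendsto_zero_iff_norm_tendsto_zero]
  have he : (fun x:ℝ => ‖Complex.exp (c * x)‖) = fun x => Real.exp (c.re * x) := by
    ext x; simp [Complex.norm_exp, Complex.mul_re]
  rw [he]
  exact Real.tendsto_exp_atBot.comp (Tendsto.const_mul_atTop_of_neg hc tendsto_id)

lemma integral_cexp_Ioi {c : ℂ} (hc : c.re < 0) :
    ∫ x in Ioi (0:ℝ), Complex.exp (c * x) = -1 / c := by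
  have hc0 : c ≠ 0 := fun h => by simp [h] at hc
  have T : Tendsto (fun x : ℝ => Complex.exp (c * x) / c) atTop (𝓝 0) := by
    simpa using (tendsto_cexp_atTop hc).div_const c
  have := integral_Ioi_of_hasDerivAt_of_tendsto'
    (fun x _ => hasDerivAt_cexp_div c hc0 x) (integrableOn_cexp_Ioi hc) T
  rw [neg_div, one_div]; simpa using this

lemma integrableOn_cexp_Iic {c : ℂ} (hc : 0 < c.re) :
    IntegrableOn (fun x : ℝ => Complex.exp (c * x)) (Iic (0:ℝ)) := by
  have h : IntegrableOn (fun x : ℝ => Complex.exp (-c * x)) (Ici (0:ℝ)) :=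
    (integrableOn_Ici_iff_integrableOn_Ioi (hb := enorm_ne_top)).2 (integrableOn_cexp_Ioi (by simpa using hc))
  have h_map_neg : ((volume : Measure ℝ).restrict (Ici (0:ℝ))).map Neg.neg
      = (volume : Measure ℝ).restrict (Iic (0:ℝ)) := by
    conv => rhs; rw [← Measure.map_neg_eq_self (volume : Measure ℝ),
      measurableEmbedding_neg.restrict_map]
    simp
  rw [IntegrableOn, ← h_map_neg, measurableEmbedding_neg.integrable_map_iff]
  have : ((fun x : ℝ => Complex.exp (c * x)) ∘ Neg.neg) = fun x : ℝ => Complex.exp (-c * x) := by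
    ext x; simp
  rw [this]; exact h

lemma integral_cexp_Iic {c : ℂ} (hc : 0 < c.re) :
    ∫ x in Iic (0:ℝ), Complex.exp (c * x) = 1 / c := by
  have h1 : (∫ x in Iic (0:ℝ), Complex.exp (c * x))
      = ∫ x in Iic (0:ℝ), (fun y : ℝ => Complex.exp (-c * y)) (-x) := by
    refine setIntegral_congr_fun measurableSet_Iic (fun x _ => ?_); simp
  have h2 := integral_comp_neg_Iic (0:ℝ) (fun y : ℝ => Complex.exp (-c * y))
  rw [h1, h2, neg_zero, integral_cexp_Ioi (by simpa using hc)]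
  rw [neg_div, div_neg, neg_neg]

lemma one_add_sq_le_aux {r : ℝ} (hr : r ≠ 0) (p y : ℝ) :
    1 + y^2 ≤ (2 + (1 + 2*p^2)/r^2) * (r^2 + (p - y)^2) := by
  have hA : (1 + 2*p^2)/r^2 * r^2 = 1 + 2*p^2 :=
    div_mul_cancel₀ _ (pow_ne_zero _ hr)
  have hA0 : 0 ≤ (1 + 2*p^2)/r^2 := by positivity
  nlinarith [sq_nonneg (2*p - y), sq_nonneg (p - y), sq_nonneg r, sq_nonneg y, sq_nonneg p,
    mul_nonneg hA0 (sq_nonneg (p - y))]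

lemma norm_denom_sq (mu : ℂ) (y : ℝ) :
    ‖mu - Complex.I * y‖^2 = mu.re^2 + (mu.im - y)^2 := by
  rw [Complex.sq_norm, Complex.normSq_apply]
  simp [Complex.sub_re, Complex.sub_im, Complex.mul_re, Complex.mul_im]
  ring

lemma norm_denom_sq' (lam : ℂ) (y : ℝ) :
    ‖Complex.I * y - lam‖^2 = lam.re^2 + (y - lam.im)^2 := by
  rw [Complex.sq_norm, Complex.normSq_apply]
  simp [Complex.sub_re, Complex.sub_im, Complex.mul_re, Complex.mul_im]
  ring

lemma denom_ne_zero {mu lam : ℂ} (hmu : mu.re < 0) (hlam : 0 < lam.re) (y : ℝ) :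
    (mu - Complex.I * y) * (Complex.I * y - lam) ≠ 0 := by
  apply mul_ne_zero
  · intro h
    have := congrArg Complex.re h
    simp [Complex.sub_re, Complex.mul_re] at this
    linarith
  · intro h
    have := congrArg Complex.re h
    simp [Complex.sub_re, Complex.mul_re] at this
    linarith

lemma integrable_kk {mu lam : ℂ} (hmu : mu.re < 0) (hlam : 0 < lam.re) :
    Integrable (fun y : ℝ => ((mu - Complex.I * y) * (Complex.I * y - lam))⁻¹) := by
  set M₁ : ℝ := 2 + (1 + 2*mu.im^2)/mu.re^2 with hM₁
  set M₂ : ℝ := 2 + (1 + 2*lam.im^2)/lam.re^2 with hM₂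
  have hM₁0 : 0 < M₁ := by positivity
  have hM₂0 : 0 < M₂ := by positivity
  set C : ℝ := Real.sqrt (M₁ * M₂) with hC
  have hC0 : 0 < C := Real.sqrt_pos.2 (by positivity)
  have hcont : Continuous fun y : ℝ => ((mu - Complex.I * y) * (Complex.I * y - lam))⁻¹ := by
    apply Continuous.inv₀
    · continuity
    · exact denom_ne_zero hmu hlam
  refine (integrable_inv_one_add_sq.const_mul C).mono' hcont.aestronglyMeasurable ?_
  filter_upwards with y
  have h1y : (0:ℝ) < 1 + y^2 := by positivity
  have hab : 1 + y^2 ≤ C * (‖mu - Complex.I * y‖ * ‖Complex.I * y - lam‖) := by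
    have e1 : (1 + y^2)^2 ≤ (M₁ * M₂) * (‖mu - Complex.I * y‖ * ‖Complex.I * y - lam‖)^2 := by
      have b1 := one_add_sq_le_aux (ne_of_lt hmu) mu.im y
      have b2 := one_add_sq_le_aux (ne_of_gt hlam) lam.im (y)
      have b2' : 1 + y^2 ≤ M₂ * (lam.re^2 + (y - lam.im)^2) := by
        have : (lam.im - y)^2 = (y - lam.im)^2 := by ring
        rw [hM₂]; rw [← this]; exact b2
      rw [mul_pow, norm_denom_sq, norm_denom_sq']
      calc (1 + y^2)^2 = (1+y^2) * (1+y^2) := sq (1+y^2) ▸ by ring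
        _ ≤ (M₁ * (mu.re^2 + (mu.im - y)^2)) * (M₂ * (lam.re^2 + (y - lam.im)^2)) := by
            apply mul_le_mul b1 b2' (le_of_lt h1y) (by positivity)
        _ = (M₁ * M₂) * ((mu.re^2 + (mu.im - y)^2) * (lam.re^2 + (y - lam.im)^2)) := by ring
    calc 1 + y^2 = Real.sqrt ((1 + y^2)^2) := (Real.sqrt_sq h1y.le).symm
      _ ≤ Real.sqrt ((M₁ * M₂) * (‖mu - Complex.I * y‖ * ‖Complex.I * y - lam‖)^2) :=
          Real.sqrt_le_sqrt e1
      _ = C * (‖mu - Complex.I * y‖ * ‖Complex.I * y - lam‖) := by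
          rw [Real.sqrt_mul (by positivity), Real.sqrt_sq (by positivity)]
  rw [norm_inv, norm_mul]
  rw [show C * (1 + y^2)⁻¹ = ((1 + y^2) / C)⁻¹ by field_simp]
  apply inv_anti₀ (by positivity)
  rw [div_le_iff₀ hC0]
  linarith [hab]

variable {mu lam : ℂ}

/-- The inverse Fourier transform of the kernel. -/
noncomputable def hfun (mu lam : ℂ) (x : ℝ) : ℂ :=
  -Complex.exp (mu * (max x 0 : ℝ) + lam * (min x 0 : ℝ)) / (mu - lam)

lemma mu_ne_lam (hmu : mu.re < 0) (hlam : 0 < lam.re) : mu - lam ≠ 0 := by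
  intro h
  have := congrArg Complex.re h
  simp [Complex.sub_re] at this
  linarith

lemma continuous_hfun : Continuous (hfun mu lam) := by
  unfold hfun
  apply Continuous.div_const
  apply Continuous.neg
  apply Complex.continuous_exp.comp
  continuity

lemma integrable_hfun (hmu : mu.re < 0) (hlam : 0 < lam.re) : Integrable (hfun mu lam) := by
  rw [← integrableOn_univ, ← Iic_union_Ioi (a := (0:ℝ)), integrableOn_union]
  have base1 : IntegrableOn (fun x : ℝ => -(Complex.exp (lam * x)) / (mu - lam)) (Iic 0) :=
    (integrableOn_cexp_Iic hlam).neg.div_const _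
  have base2 : IntegrableOn (fun x : ℝ => -(Complex.exp (mu * x)) / (mu - lam)) (Ioi 0) :=
    (integrableOn_cexp_Ioi hmu).neg.div_const _
  constructor
  · refine base1.congr_fun ?_ measurableSet_Iic
    intro x hx
    simp only [hfun, Set.mem_Iic] at hx ⊢
    rw [max_eq_right hx, min_eq_left hx]
    norm_num
  · refine base2.congr_fun ?_ measurableSet_Ioi
    intro x hx
    simp only [hfun, Set.mem_Ioi] at hx ⊢
    rw [max_eq_left hx.le, min_eq_right hx.le]
    norm_num

lemma fourier_hfun (hmu : mu.re < 0) (hlam : 0 < lam.re) (ξ : ℝ) :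
    𝓕 (hfun mu lam) ξ
      = ((mu - Complex.I * (2 * π * ξ : ℝ)) * (Complex.I * (2 * π * ξ : ℝ) - lam))⁻¹ := by
  set w : ℝ := 2 * π * ξ with hw
  set c₁ : ℂ := mu - (w : ℂ) * Complex.I with hc₁
  set c₂ : ℂ := lam - (w : ℂ) * Complex.I with hc₂
  have hc₁re : c₁.re = mu.re := by simp [hc₁]
  have hc₂re : c₂.re = lam.re := by simp [hc₂]
  have hc₁0 : c₁ ≠ 0 := fun h => by rw [h] at hc₁re; simp at hc₁re; linarith
  have hc₂0 : c₂ ≠ 0 := fun h => by rw [h] at hc₂re; simp at hc₂re; linarith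
  have hc : mu - lam ≠ 0 := mu_ne_lam hmu hlam
  have hIoi : EqOn (fun v : ℝ => Complex.exp ((-2 * π * v * ξ : ℝ) * Complex.I) • hfun mu lam v)
      (fun v : ℝ => (-1 / (mu - lam)) * Complex.exp (c₁ * v)) (Ioi 0) := by
    intro v hv
    simp only [Set.mem_Ioi] at hv
    simp only [hfun, smul_eq_mul, max_eq_left hv.le, min_eq_right hv.le]
    have he : Complex.exp ((-2 * π * v * ξ : ℝ) * Complex.I)
        * Complex.exp (mu * (v:ℝ) + lam * ((0:ℝ):ℂ)) = Complex.exp (c₁ * v) := by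
      rw [← Complex.exp_add]; congr 1; rw [hc₁, hw]; push_cast; ring
    calc Complex.exp ((-2 * π * v * ξ : ℝ) * Complex.I)
          * (-Complex.exp (mu * (v:ℝ) + lam * ((0:ℝ):ℂ)) / (mu - lam))
        = -1 / (mu - lam) * (Complex.exp ((-2 * π * v * ξ : ℝ) * Complex.I)
            * Complex.exp (mu * (v:ℝ) + lam * ((0:ℝ):ℂ))) := by ring
      _ = -1 / (mu - lam) * Complex.exp (c₁ * v) := by rw [he]
  have hIic : EqOn (fun v : ℝ => Complex.exp ((-2 * π * v * ξ : ℝ) * Complex.I) • hfun mu lam v)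
      (fun v : ℝ => (-1 / (mu - lam)) * Complex.exp (c₂ * v)) (Iic 0) := by
    intro v hv
    simp only [Set.mem_Iic] at hv
    simp only [hfun, smul_eq_mul, max_eq_right hv, min_eq_left hv]
    have he : Complex.exp ((-2 * π * v * ξ : ℝ) * Complex.I)
        * Complex.exp (mu * ((0:ℝ):ℂ) + lam * (v:ℝ)) = Complex.exp (c₂ * v) := by
      rw [← Complex.exp_add]; congr 1; rw [hc₂, hw]; push_cast; ring
    calc Complex.exp ((-2 * π * v * ξ : ℝ) * Complex.I)
          * (-Complex.exp (mu * ((0:ℝ):ℂ) + lam * (v:ℝ)) / (mu - lam))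
        = -1 / (mu - lam) * (Complex.exp ((-2 * π * v * ξ : ℝ) * Complex.I)
            * Complex.exp (mu * ((0:ℝ):ℂ) + lam * (v:ℝ))) := by ring
      _ = -1 / (mu - lam) * Complex.exp (c₂ * v) := by rw [he]
  have base1 : IntegrableOn (fun v : ℝ => (-1 / (mu - lam)) * Complex.exp (c₂ * v)) (Iic 0) :=
    (integrableOn_cexp_Iic (by rwa [← hc₂re] at hlam)).const_mul _
  have base2 : IntegrableOn (fun v : ℝ => (-1 / (mu - lam)) * Complex.exp (c₁ * v)) (Ioi 0) :=
    (integrableOn_cexp_Ioi (by rwa [← hc₁re] at hmu)).const_mul _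
  have int1 : IntegrableOn
      (fun v : ℝ => Complex.exp ((-2 * π * v * ξ : ℝ) * Complex.I) • hfun mu lam v) (Iic 0) :=
    base1.congr_fun (fun x hx => (hIic hx).symm) measurableSet_Iic
  have int2 : IntegrableOn
      (fun v : ℝ => Complex.exp ((-2 * π * v * ξ : ℝ) * Complex.I) • hfun mu lam v) (Ioi 0) :=
    base2.congr_fun (fun x hx => (hIoi hx).symm) measurableSet_Ioi
  rw [Real.fourier_real_eq_integral_exp_smul]
  rw [← setIntegral_univ, ← Iic_union_Ioi (a := (0:ℝ)),
    setIntegral_union (Iic_disjoint_Ioi le_rfl) measurableSet_Ioi int1 int2]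
  rw [setIntegral_congr_fun measurableSet_Iic hIic,
    setIntegral_congr_fun measurableSet_Ioi hIoi]
  rw [integral_const_mul, integral_const_mul,
    integral_cexp_Iic (by rwa [← hc₂re] at hlam),
    integral_cexp_Ioi (by rwa [← hc₁re] at hmu)]
  have e1 : mu - Complex.I * (w : ℂ) = c₁ := by rw [hc₁]; ring
  have e2 : Complex.I * (w : ℂ) - lam = -c₂ := by rw [hc₂]; ring
  rw [e1, e2]
  field_simp
  ring

lemma integrable_fourier_hfun (hmu : mu.re < 0) (hlam : 0 < lam.re) :
    Integrable (𝓕 (hfun mu lam)) := by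
  have : 𝓕 (hfun mu lam) = fun ξ : ℝ =>
      (fun y : ℝ => ((mu - Complex.I * y) * (Complex.I * y - lam))⁻¹) ((2 * π) * ξ) := by
    ext ξ
    rw [fourier_hfun hmu hlam ξ]
  rw [this]
  exact (integrable_kk hmu hlam).comp_mul_left' (by positivity)

lemma key_integral (hmu : mu.re < 0) (hlam : 0 < lam.re) (b : ℝ) :
    ∫ y : ℝ, Complex.exp (Complex.I * y * b) / ((mu - Complex.I * y) * (Complex.I * y - lam))
      = 2 * π * hfun mu lam b := by
  have hinv : 𝓕⁻ (𝓕 (hfun mu lam)) b = hfun mu lam b :=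
    (integrable_hfun hmu hlam).fourierInv_fourier_eq (integrable_fourier_hfun hmu hlam)
      continuous_hfun.continuousAt
  set G : ℝ → ℂ := fun y =>
    Complex.exp (Complex.I * y * b) / ((mu - Complex.I * y) * (Complex.I * y - lam)) with hG
  have h2 : 𝓕⁻ (𝓕 (hfun mu lam)) b = ∫ v : ℝ, G ((2 * π) * v) := by
    rw [Real.fourierInv_eq']
    congr 1
    ext v
    rw [fourier_hfun hmu hlam v]
    simp only [hG, RCLike.inner_apply, conj_trivial, smul_eq_mul]
    rw [div_eq_mul_inv]
    congr 1
    congr 1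
    push_cast
    ring
  have h3 := MeasureTheory.Measure.integral_comp_mul_left G (2 * π)
  rw [h3, hinv] at h2
  rw [abs_of_pos (by positivity : (0:ℝ) < (2*π)⁻¹), real_smul] at h2
  have hne : ((2 * π : ℝ) : ℂ) ≠ 0 := by
    simp [Real.pi_ne_zero]
  rw [show (2 * (π:ℂ)) = ((2 * π : ℝ) : ℂ) by push_cast; ring, h2, ← mul_assoc]
  push_cast
  rw [mul_inv_cancel₀ (by push_cast at hne ⊢; exact hne), one_mul]

lemma sum_neg_one_pow_Icc (n : ℕ) :
    ∑ k ∈ Finset.Icc 1 n, (-1:ℂ)^k = if Even n then 0 else -1 := by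
  induction n with
  | zero => simp
  | succ n ih =>
    rw [Finset.sum_Icc_succ_top (by omega : 1 ≤ n + 1), ih]
    by_cases h : Even n
    · rw [if_pos h, if_neg (by simp [Nat.even_add_one, h]), zero_add, pow_succ,
        h.neg_one_pow, one_mul]
    · rw [if_neg h, if_pos (by simp [Nat.even_add_one, h]), pow_succ,
        (Nat.not_even_iff_odd.1 h).neg_one_pow]
      ring

lemma telescope_sum (n : ℕ) (E : ℕ → ℂ) :
    ∑ j ∈ Finset.Icc 1 n, ∑ k ∈ Finset.Icc 1 n,
        (-1:ℂ)^(j+k) * (if k ≤ j then E j else E k)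
      = ∑ j ∈ Finset.Icc 1 n, (-1:ℂ)^(j+1) * E j := by
  induction n with
  | zero => simp
  | succ n ih =>
    have h1 : (1:ℕ) ≤ n + 1 := by omega
    have inner_expand : ∀ j : ℕ,
        ∑ k ∈ Finset.Icc 1 (n+1), (-1:ℂ)^(j+k) * (if k ≤ j then E j else E k)
          = (∑ k ∈ Finset.Icc 1 n, (-1:ℂ)^(j+k) * (if k ≤ j then E j else E k))
            + (-1:ℂ)^(j+(n+1)) * (if n+1 ≤ j then E j else E (n+1)) :=
      fun j => Finset.sum_Icc_succ_top h1 _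
    rw [Finset.sum_Icc_succ_top h1, Finset.sum_Icc_succ_top h1
      (f := fun j => (-1:ℂ)^(j+1) * E j)]
    simp only [inner_expand]
    rw [Finset.sum_add_distrib, ih]
    have hT2 : ∑ j ∈ Finset.Icc 1 n, (-1:ℂ)^(j+(n+1)) * (if n+1 ≤ j then E j else E (n+1))
        = (∑ j ∈ Finset.Icc 1 n, (-1:ℂ)^j) * ((-1:ℂ)^(n+1) * E (n+1)) := by
      rw [Finset.sum_mul]
      refine Finset.sum_congr rfl (fun j hj => ?_)
      rw [Finset.mem_Icc] at hj
      rw [if_neg (by omega), pow_add]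
      ring
    have hT3 : ∑ k ∈ Finset.Icc 1 n, (-1:ℂ)^((n+1)+k) * (if k ≤ n+1 then E (n+1) else E k)
        = (∑ k ∈ Finset.Icc 1 n, (-1:ℂ)^k) * ((-1:ℂ)^(n+1) * E (n+1)) := by
      rw [Finset.sum_mul]
      refine Finset.sum_congr rfl (fun k hk => ?_)
      rw [Finset.mem_Icc] at hk
      rw [if_pos (by omega), pow_add]
      ring
    rw [hT2, hT3, sum_neg_one_pow_Icc]
    rw [if_pos (le_refl (n+1)), show (n+1)+(n+1) = 2*(n+1) by ring, pow_mul]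
    norm_num
    by_cases h : Even n
    · rw [if_pos h]
      have he : Even (n + 1 + 1) := by simp [Nat.even_add_one, h]
      rw [he.neg_one_pow]
      ring
    · rw [if_neg h]
      have hno : Even (n + 1) := by simp [Nat.even_add_one, h]
      have ho2 : Odd (n + 1 + 1) := by
        rcases Nat.not_even_iff_odd.1 h with ⟨m, hm⟩
        exact ⟨m + 1, by omega⟩
      rw [hno.neg_one_pow, ho2.neg_one_pow]
      ring

/-- The residue computation and telescoping cancellation underlying the composed kernel
`H̃ₖ Hⱼ` of the tacnode Riemann–Hilbert analysis: for strictly increasing endpoints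
`a₁ < ⋯ < a_{2K}` and `Re μ < 0 < Re λ`,
`∑_{j,k=1}^{2K} (−1)^{j+k+1} (1/2π) ∫ e^{iy(aⱼ−aₖ)} e^{μaₖ−λaⱼ} / ((μ−iy)(iy−λ)) dy
  = (1/(μ−λ)) ∑_{j=1}^{2K} (−1)^{j+1} e^{(μ−λ)aⱼ}`. -/
theorem tacnode_HH_telescoping (K : ℕ) (hK : 1 ≤ K) (a : ℕ → ℝ)
    (ha : StrictMonoOn a (Set.Icc 1 (2 * K)))
    (mu lam : ℂ) (hmu : mu.re < 0) (hlam : 0 < lam.re) :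
    ∑ j ∈ Finset.Icc 1 (2 * K), ∑ k ∈ Finset.Icc 1 (2 * K),
        (-1 : ℂ) ^ (j + k + 1) *
          ((1 / (2 * (Real.pi : ℂ))) *
            ∫ y : ℝ,
              Complex.exp (Complex.I * y * (a j - a k)) *
                Complex.exp (mu * a k - lam * a j) /
                ((mu - Complex.I * y) * (Complex.I * y - lam))) =
      (1 / (mu - lam)) *
        ∑ j ∈ Finset.Icc 1 (2 * K),
          (-1 : ℂ) ^ (j + 1) * Complex.exp ((mu - lam) * a j) := by
  have hc : mu - lam ≠ 0 := mu_ne_lam hmu hlam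
  have h2pi : (2 * (Real.pi : ℂ)) ≠ 0 := by
    simp [Real.pi_ne_zero]
  set E : ℕ → ℂ := fun j => Complex.exp ((mu - lam) * a j) / (mu - lam) with hE
  have hmono := ha.monotoneOn
  have key : ∀ j ∈ Finset.Icc 1 (2 * K), ∀ k ∈ Finset.Icc 1 (2 * K),
      (-1 : ℂ) ^ (j + k + 1) *
          ((1 / (2 * (Real.pi : ℂ))) *
            ∫ y : ℝ,
              Complex.exp (Complex.I * y * ((a j : ℂ) - (a k : ℂ))) *
                Complex.exp (mu * a k - lam * a j) /
                ((mu - Complex.I * y) * (Complex.I * y - lam)))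
        = (-1 : ℂ) ^ (j + k) * (if k ≤ j then E j else E k) := by
    intro j hj k hk
    rw [Finset.mem_Icc] at hj hk
    have hj' : (j : ℕ) ∈ Set.Icc 1 (2 * K) := by simpa using hj
    have hk' : (k : ℕ) ∈ Set.Icc 1 (2 * K) := by simpa using hk
    have hint : (fun y : ℝ =>
        Complex.exp (Complex.I * y * ((a j : ℂ) - (a k : ℂ))) *
          Complex.exp (mu * a k - lam * a j) /
          ((mu - Complex.I * y) * (Complex.I * y - lam)))
        = fun y : ℝ => Complex.exp (mu * a k - lam * a j) *
            (Complex.exp (Complex.I * y * ((a j - a k : ℝ) : ℂ)) /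
              ((mu - Complex.I * y) * (Complex.I * y - lam))) := by
      funext y
      push_cast
      ring
    rw [hint, MeasureTheory.integral_const_mul, key_integral hmu hlam (a j - a k)]
    have cancel : ∀ X Y : ℂ, 1 / (2 * (Real.pi : ℂ)) * (X * (2 * (Real.pi : ℂ) * Y)) = X * Y := by
      intro X Y
      field_simp
    rw [cancel]
    by_cases hkj : k ≤ j
    · rw [if_pos hkj]
      have hak : a k ≤ a j := hmono hk' hj' hkj
      have hb : ((max (a j - a k) 0 : ℝ) : ℂ) = (a j : ℂ) - (a k : ℂ) := by
        rw [max_eq_left (by linarith)]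
        push_cast
        ring
      have hb0 : ((min (a j - a k) 0 : ℝ) : ℂ) = 0 := by
        rw [min_eq_right (by linarith)]
        simp
      simp only [hfun, hb, hb0, mul_zero, add_zero]
      have hexp : Complex.exp (mu * a k - lam * a j) * Complex.exp (mu * ((a j : ℂ) - (a k : ℂ)))
          = Complex.exp ((mu - lam) * a j) := by
        rw [← Complex.exp_add]
        congr 1
        ring
      rw [hE]
      rw [pow_succ]
      calc (-1:ℂ) ^ (j + k) * -1 *
            (Complex.exp (mu * a k - lam * a j) *
              (-Complex.exp (mu * ((a j : ℂ) - (a k : ℂ))) / (mu - lam)))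
          = (-1:ℂ) ^ (j + k) *
            ((Complex.exp (mu * a k - lam * a j) * Complex.exp (mu * ((a j : ℂ) - (a k : ℂ))))
              / (mu - lam)) := by ring
        _ = (-1:ℂ) ^ (j + k) * (Complex.exp ((mu - lam) * a j) / (mu - lam)) := by rw [hexp]
    · rw [if_neg hkj]
      push_neg at hkj
      have hak : a j ≤ a k := hmono hj' hk' hkj.le
      have hb : ((max (a j - a k) 0 : ℝ) : ℂ) = 0 := by
        rw [max_eq_right (by linarith)]
        simp
      have hb0 : ((min (a j - a k) 0 : ℝ) : ℂ) = (a j : ℂ) - (a k : ℂ) := by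
        rw [min_eq_left (by linarith)]
        push_cast
        ring
      simp only [hfun, hb, hb0, mul_zero, zero_add]
      have hexp : Complex.exp (mu * a k - lam * a j) * Complex.exp (lam * ((a j : ℂ) - (a k : ℂ)))
          = Complex.exp ((mu - lam) * a k) := by
        rw [← Complex.exp_add]
        congr 1
        ring
      rw [hE]
      rw [pow_succ]
      calc (-1:ℂ) ^ (j + k) * -1 *
            (Complex.exp (mu * a k - lam * a j) *
              (-Complex.exp (lam * ((a j : ℂ) - (a k : ℂ))) / (mu - lam)))
          = (-1:ℂ) ^ (j + k) *
            ((Complex.exp (mu * a k - lam * a j) * Complex.exp (lam * ((a j : ℂ) - (a k : ℂ))))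
              / (mu - lam)) := by ring
        _ = (-1:ℂ) ^ (j + k) * (Complex.exp ((mu - lam) * a k) / (mu - lam)) := by rw [hexp]
  calc ∑ j ∈ Finset.Icc 1 (2 * K), ∑ k ∈ Finset.Icc 1 (2 * K),
        (-1 : ℂ) ^ (j + k + 1) *
          ((1 / (2 * (Real.pi : ℂ))) *
            ∫ y : ℝ,
              Complex.exp (Complex.I * y * ((a j : ℂ) - (a k : ℂ))) *
                Complex.exp (mu * a k - lam * a j) /
                ((mu - Complex.I * y) * (Complex.I * y - lam)))
      = ∑ j ∈ Finset.Icc 1 (2 * K), ∑ k ∈ Finset.Icc 1 (2 * K),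
          (-1 : ℂ) ^ (j + k) * (if k ≤ j then E j else E k) :=
        Finset.sum_congr rfl (fun j hj => Finset.sum_congr rfl (fun k hk => key j hj k hk))
    _ = ∑ j ∈ Finset.Icc 1 (2 * K), (-1:ℂ)^(j+1) * E j := telescope_sum (2 * K) E
    _ = (1 / (mu - lam)) *
        ∑ j ∈ Finset.Icc 1 (2 * K), (-1 : ℂ) ^ (j + 1) * Complex.exp ((mu - lam) * a j) := by
      rw [Finset.mul_sum]
      refine Finset.sum_congr rfl (fun j hj => ?_)
      rw [hE]
      ring
end
end

section
/- Fix real numbers a ≤ b and σ. Then there exists a constant C > 0 such that for every τ ≥ 1 and all x, y ∈ [a, b]: | e^{τ(y − x)} ∫_0^∞ Ai(σ − x + τ² + 2^{1/3} u) · Ai(σ − y + τ² + 2^{1/3} u) du | ≤ C/√τ. In particular the kernel K_Ai^{(τ,−τ)}(σ−x, σ−y) = e^{τ(y−x)} ∫_0^∞ Ai(σ−x+τ²+2^{1/3}u) Ai(σ−y+τ²+2^{1/3}u) du tends to zero uniformly on compact sets as τ → +∞. -/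
open MeasureTheory Set Complex

/-- `e^{iπ/3}`. -/
noncomputable def eP : ℂ := Complex.exp (Real.pi / 3 * Complex.I)

/-- `e^{-iπ/3}`. -/
noncomputable def eM : ℂ := Complex.exp (-(Real.pi / 3) * Complex.I)

/-- The Airy function `Ai(x)`. -/
noncomputable def Ai (x : ℝ) : ℂ :=
  (2 * Real.pi * Complex.I)⁻¹ *
    ∫ u in Ioi (0 : ℝ),
      (eP * Complex.exp (-(u : ℂ) ^ 3 / 3 - x * (eP * u))
        - eM * Complex.exp (-(u : ℂ) ^ 3 / 3 - x * (eM * u)))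

lemma ePdef : eP = (1/2 : ℂ) + ((Real.sqrt 3 / 2 : ℝ) : ℂ) * Complex.I := by
  rw [eP, show ((Real.pi : ℂ) / 3 * Complex.I) = ((Real.pi/3 : ℝ) : ℂ) * Complex.I by push_cast; ring,
    Complex.exp_mul_I, ← Complex.ofReal_cos, ← Complex.ofReal_sin,
    Real.cos_pi_div_three, Real.sin_pi_div_three]
  push_cast; ring

lemma eMdef : eM = (1/2 : ℂ) + ((-(Real.sqrt 3 / 2) : ℝ) : ℂ) * Complex.I := by
  rw [eM, show (-((Real.pi : ℂ) / 3) * Complex.I) = ((-(Real.pi/3) : ℝ) : ℂ) * Complex.I by push_cast; ring,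
    Complex.exp_mul_I, ← Complex.ofReal_cos, ← Complex.ofReal_sin,
    Real.cos_neg, Real.sin_neg, Real.cos_pi_div_three, Real.sin_pi_div_three]
  push_cast; ring

lemma exponent_re (s m t u : ℝ) (hs : s^2 = 3/4) :
    ((((m:ℂ) + ((1/2 : ℂ) + (s:ℂ) * Complex.I) * (u:ℂ))^3)/3
      - (t:ℂ) * ((m:ℂ) + ((1/2 : ℂ) + (s:ℂ) * Complex.I) * (u:ℂ))).re
    = m^3/3 + m^2*u/2 - m*u^2/2 - u^3/3 - t*m - t*u/2 := by
  have h : (m:ℂ) + ((1/2 : ℂ) + (s:ℂ) * Complex.I) * (u:ℂ)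
      = ((m + u/2 : ℝ) : ℂ) + ((s*u : ℝ) : ℂ) * Complex.I := by push_cast; ring
  rw [h]
  set X := m + u/2 with hX
  set Y := s*u with hY
  have h3 : (((X:ℂ) + (Y:ℂ)*Complex.I)^3/3 - (t:ℂ)*((X:ℂ)+(Y:ℂ)*Complex.I)).re
      = X^3/3 - X*Y^2 - t*X := by
    simp [pow_succ, Complex.div_re, Complex.add_re, Complex.mul_re, Complex.mul_im,
      Complex.normSq, Complex.ofReal_re, Complex.ofReal_im, Complex.I_re, Complex.I_im]
    ring
  rw [h3]
  have h4 : Y^2 = 3/4 * u^2 := by rw [hY, mul_pow, hs]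
  rw [h4, hX]; ring

lemma normeP : ‖eP‖ = 1 := by
  rw [eP, Complex.norm_exp]
  norm_num

lemma normeM : ‖eM‖ = 1 := by
  rw [eM, Complex.norm_exp]
  norm_num

lemma eP_cube : eP^3 = -1 := by
  rw [eP, ← Complex.exp_nat_mul]
  rw [show ((3:ℕ):ℂ) * ((Real.pi:ℂ)/3 * Complex.I) = (Real.pi:ℂ) * Complex.I by push_cast; ring]
  exact Complex.exp_pi_mul_I

lemma eM_cube : eM^3 = -1 := by
  rw [eM, ← Complex.exp_nat_mul]
  rw [show ((3:ℕ):ℂ) * (-((Real.pi:ℂ)/3) * Complex.I) = -((Real.pi:ℂ) * Complex.I) by push_cast; ring,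
    Complex.exp_neg, Complex.exp_pi_mul_I]
  norm_num

-- master inequality
lemma poly_le (A B : ℝ) : ∃ C : ℝ, ∀ u : ℝ, 0 ≤ u → A*u + B*u^2 - u^3/3 ≤ C - u := by
  obtain ⟨β, hβ0, hβB⟩ : ∃ β : ℝ, 0 < β ∧ B + 1/2 ≤ β :=
    ⟨max B 0 + 1/2, by positivity, by have := le_max_left B 0; linarith⟩
  refine ⟨(A+1)^2/2 + 4/3 * β^3, fun u hu => ?_⟩
  have h1 : (A+1)*u ≤ (A+1)^2/2 + u^2/2 := by nlinarith [sq_nonneg (A+1-u)]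
  have h3 : β*u^2 - u^3/3 ≤ 4/3 * β^3 := by
    nlinarith [mul_nonneg (sq_nonneg (u - 2*β)) (add_nonneg hu hβ0.le)]
  nlinarith [mul_le_mul_of_nonneg_left hβB (sq_nonneg u)]

noncomputable def fA (t : ℝ) (z : ℂ) : ℂ := Complex.exp (z^3/3 - t*z)

lemma continuous_fA (t : ℝ) : Continuous (fA t) := by
  unfold fA; fun_prop

noncomputable def Ebd (m t u : ℝ) : ℝ := m^3/3 + m^2*u/2 - m*u^2/2 - u^3/3 - t*m - t*u/2

lemma sP_sq : (Real.sqrt 3 / 2)^2 = 3/4 := by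
  rw [div_pow, Real.sq_sqrt (by norm_num : (3:ℝ) ≥ 0)]; norm_num

lemma norm_fA_P (t m u : ℝ) : ‖fA t ((m:ℂ) + eP*(u:ℂ))‖ = Real.exp (Ebd m t u) := by
  rw [fA, Complex.norm_exp, ePdef, exponent_re _ _ _ _ sP_sq, Ebd]

lemma norm_fA_M (t m u : ℝ) : ‖fA t ((m:ℂ) + eM*(u:ℂ))‖ = Real.exp (Ebd m t u) := by
  rw [fA, Complex.norm_exp, eMdef, exponent_re _ _ _ _ (by rw [neg_pow]; simp [sP_sq]), Ebd]

lemma Ebd_eq (m t u : ℝ) :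
    Ebd m t u = (m^3/3 - t*m) + (((m^2-t)/2)*u + (-(m/2))*u^2 - u^3/3) := by
  rw [Ebd]; ring

lemma expBound (a b : ℝ) : ∃ C > (0:ℝ), ∀ u : ℝ, 0 ≤ u →
    Real.exp (a*u + b*u^2 - u^3/3) ≤ C * Real.exp (-u) := by
  obtain ⟨C, hC⟩ := poly_le a b
  refine ⟨Real.exp C, Real.exp_pos _, fun u hu => ?_⟩
  rw [← Real.exp_add]
  exact Real.exp_le_exp.2 (by have := hC u hu; linarith)

lemma polyExpBound (a b c : ℝ) (hc : 0 ≤ c) : ∃ C > (0:ℝ), ∀ u : ℝ, 0 ≤ u →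
    (u^2 + c) * Real.exp (a*u + b*u^2 - u^3/3) ≤ C * Real.exp (-u) := by
  obtain ⟨C, hC0, hC⟩ := expBound (a+1) b
  refine ⟨(4+c)*C, by positivity, fun u hu => ?_⟩
  have h1 : u^2 + c ≤ (4+c) * Real.exp u := by
    have h2 : u/2 + 1 ≤ Real.exp (u/2) := Real.add_one_le_exp _
    have h3 : Real.exp u = Real.exp (u/2) * Real.exp (u/2) := by
      rw [← Real.exp_add]; ring_nf
    have h4 : (1:ℝ) ≤ Real.exp u := Real.one_le_exp (by linarith)
    nlinarith [Real.exp_pos (u/2)]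
  calc (u^2 + c) * Real.exp (a*u + b*u^2 - u^3/3)
      ≤ (4+c) * Real.exp u * Real.exp (a*u + b*u^2 - u^3/3) := by
        exact mul_le_mul_of_nonneg_right h1 (Real.exp_pos _).le
    _ = (4+c) * Real.exp ((a+1)*u + b*u^2 - u^3/3) := by
        rw [mul_assoc, ← Real.exp_add]; ring_nf
    _ ≤ (4+c) * (C * Real.exp (-u)) := by
        exact mul_le_mul_of_nonneg_left (hC u hu) (by positivity)
    _ = (4+c)*C * Real.exp (-u) := by ring

noncomputable def gker (t m u : ℝ) : ℂ :=
  eP * fA t ((m:ℂ) + eP*(u:ℂ)) - eM * fA t ((m:ℂ) + eM*(u:ℂ))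

noncomputable def gker' (t m u : ℝ) : ℂ :=
  eP * ((((m:ℂ)+eP*(u:ℂ))^2 - (t:ℂ)) * fA t ((m:ℂ)+eP*(u:ℂ)))
    - eM * ((((m:ℂ)+eM*(u:ℂ))^2 - (t:ℂ)) * fA t ((m:ℂ)+eM*(u:ℂ)))

noncomputable def Fc (t m : ℝ) : ℂ := (2*(Real.pi:ℂ)*Complex.I)⁻¹ * ∫ u in Ioi (0:ℝ), gker t m u

lemma continuous_gker (t m : ℝ) : Continuous (fun u => gker t m u) := by
  unfold gker fA; fun_prop

lemma continuous_gker' (t m : ℝ) : Continuous (fun u => gker' t m u) := by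
  unfold gker' fA; fun_prop

lemma norm_gker_le (t m u : ℝ) : ‖gker t m u‖ ≤ 2 * Real.exp (Ebd m t u) := by
  calc ‖gker t m u‖ ≤ ‖eP * fA t ((m:ℂ) + eP*(u:ℂ))‖ + ‖eM * fA t ((m:ℂ) + eM*(u:ℂ))‖ :=
        norm_sub_le _ _
    _ = 2 * Real.exp (Ebd m t u) := by
        rw [norm_mul, norm_mul, normeP, normeM, norm_fA_P, norm_fA_M]; ring

lemma gker_bound (t m : ℝ) : ∃ C > (0:ℝ), ∀ u : ℝ, 0 ≤ u →
    ‖gker t m u‖ ≤ C * Real.exp (-u) := by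
  obtain ⟨C, hC0, hC⟩ := expBound ((m^2-t)/2) (-(m/2))
  refine ⟨2 * Real.exp (m^3/3 - t*m) * C, by positivity, fun u hu => ?_⟩
  calc ‖gker t m u‖ ≤ 2 * Real.exp (Ebd m t u) := norm_gker_le t m u
    _ = 2 * Real.exp (m^3/3 - t*m) * Real.exp (((m^2-t)/2)*u + (-(m/2))*u^2 - u^3/3) := by
        rw [Ebd_eq, Real.exp_add]; ring
    _ ≤ 2 * Real.exp (m^3/3 - t*m) * (C * Real.exp (-u)) := by
        refine mul_le_mul_of_nonneg_left (hC u hu) (by positivity)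
    _ = 2 * Real.exp (m^3/3 - t*m) * C * Real.exp (-u) := by ring

lemma expneg_integrableOn : IntegrableOn (fun u : ℝ => Real.exp (-u)) (Ioi (0:ℝ)) := by
  simpa using exp_neg_integrableOn_Ioi 0 (by norm_num : (0:ℝ) < 1)

lemma gker_integrable (t m : ℝ) : IntegrableOn (fun u => gker t m u) (Ioi (0:ℝ)) := by
  obtain ⟨C, hC0, hC⟩ := gker_bound t m
  refine Integrable.mono' ((expneg_integrableOn.const_mul C))
    (continuous_gker t m).aestronglyMeasurable ?_
  filter_upwards [ae_restrict_mem measurableSet_Ioi] with u hu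
  exact hC u (le_of_lt hu)

lemma fA_deriv_complex (t : ℝ) (z : ℂ) :
    HasDerivAt (fA t) ((z^2 - (t:ℂ)) * fA t z) z := by
  have h : HasDerivAt (fun z : ℂ => z^3/3 - (t:ℂ)*z) (z^2 - (t:ℂ)) z := by
    have h1 := (hasDerivAt_pow 3 z).div_const (3:ℂ)
    have h2 := (hasDerivAt_id z).const_mul (t:ℂ)
    have := h1.sub h2
    refine this.congr_deriv ?_
    push_cast; ring_nf
  have := h.cexp
  refine this.congr_deriv ?_
  rw [fA]; ring

lemma hasDerivAt_term_m (t u : ℝ) (e : ℂ) (m : ℝ) :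
    HasDerivAt (fun m : ℝ => fA t ((m:ℂ) + e*(u:ℂ)))
      ((((m:ℂ)+e*(u:ℂ))^2 - (t:ℂ)) * fA t ((m:ℂ)+e*(u:ℂ))) m := by
  have h0 : HasDerivAt (fun w : ℂ => fA t (w + e*(u:ℂ)))
      ((((m:ℂ)+e*(u:ℂ))^2 - (t:ℂ)) * fA t ((m:ℂ)+e*(u:ℂ))) (m:ℂ) := by
    have hinner : HasDerivAt (fun w : ℂ => w + e*(u:ℂ)) 1 (m:ℂ) :=
      (hasDerivAt_id _).add_const _
    have := (fA_deriv_complex t ((m:ℂ)+e*(u:ℂ))).comp (m:ℂ) hinner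
    exact this.congr_deriv (by simp)
  exact h0.comp_ofReal

lemma hasDerivAt_term_u (t m : ℝ) (e : ℂ) (u : ℝ) :
    HasDerivAt (fun u : ℝ => fA t ((m:ℂ) + e*(u:ℂ)))
      (e * ((((m:ℂ)+e*(u:ℂ))^2 - (t:ℂ)) * fA t ((m:ℂ)+e*(u:ℂ)))) u := by
  have h0 : HasDerivAt (fun w : ℂ => fA t ((m:ℂ) + e*w))
      (e * ((((m:ℂ)+e*(u:ℂ))^2 - (t:ℂ)) * fA t ((m:ℂ)+e*(u:ℂ)))) (u:ℂ) := by
    have hinner : HasDerivAt (fun w : ℂ => (m:ℂ) + e*w) e (u:ℂ) := by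
      simpa using ((hasDerivAt_id (u:ℂ)).const_mul e).const_add (m:ℂ)
    have := (fA_deriv_complex t ((m:ℂ)+e*(u:ℂ))).comp (u:ℂ) hinner
    refine this.congr_deriv ?_
    ring
  exact h0.comp_ofReal

lemma hasDerivAt_gker_m (t u m : ℝ) :
    HasDerivAt (fun m : ℝ => gker t m u) (gker' t m u) m := by
  have hP := (hasDerivAt_term_m t u eP m).const_mul eP
  have hM := (hasDerivAt_term_m t u eM m).const_mul eM
  exact hP.sub hM

lemma cube_le (m M : ℝ) (h : |m| ≤ M) : m^3 ≤ M^3 := by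
  have h1 : m ≤ M := (le_abs_self m).trans h
  have h2 : -M ≤ m := by have := neg_abs_le m; linarith
  nlinarith [sq_nonneg (m+M), sq_nonneg (m-M)]

lemma Ebd_le (M t m u : ℝ) (hm : |m| ≤ M) (hu : 0 ≤ u) :
    Ebd m t u ≤ (M^3/3 + |t| *M) + (((M^2+|t|)/2)*u + (M/2)*u^2 - u^3/3) := by
  have hM0 : 0 ≤ M := (abs_nonneg m).trans hm
  have h1 : m^3/3 ≤ M^3/3 := by linarith [cube_le m M hm]
  have h2 : -(t*m) ≤ |t| *M := by
    calc -(t*m) ≤ |t*m| := neg_le_abs _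
      _ = |t| *|m| := abs_mul _ _
      _ ≤ |t| *M := mul_le_mul_of_nonneg_left hm (abs_nonneg t)
  have h3 : m^2*u/2 - t*u/2 ≤ ((M^2+|t|)/2)*u := by
    have hm2 : m^2 ≤ M^2 := by
      have := pow_le_pow_left₀ (abs_nonneg m) hm 2
      rwa [_root_.sq_abs] at this
    have ht : -t ≤ |t| := neg_le_abs t
    nlinarith
  have h4 : -(m*u^2/2) ≤ (M/2)*u^2 := by
    have : -m ≤ M := by have := neg_abs_le m; linarith
    nlinarith [sq_nonneg u]
  rw [Ebd]; nlinarith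

lemma term'_bound (t m₀ : ℝ) (e : ℂ) (he : ‖e‖ = 1)
    (hre : ∀ m u : ℝ, ‖fA t ((m:ℂ)+e*(u:ℂ))‖ = Real.exp (Ebd m t u)) :
    ∃ C > (0:ℝ), ∀ m u : ℝ, |m| ≤ |m₀|+1 → 0 ≤ u →
      ‖e * ((((m:ℂ)+e*(u:ℂ))^2 - (t:ℂ)) * fA t ((m:ℂ)+e*(u:ℂ)))‖ ≤ C * Real.exp (-u) := by
  set M := |m₀|+1 with hM
  have hM0 : (0:ℝ) ≤ M := by positivity
  obtain ⟨C, hC0, hC⟩ := polyExpBound ((M^2+|t|)/2) (M/2) (M^2+|t|) (by positivity)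
  refine ⟨2 * Real.exp (M^3/3 + |t| *M) * C, by positivity, fun m u hm hu => ?_⟩
  have hz : ‖(m:ℂ)+e*(u:ℂ)‖ ≤ M + u := by
    calc ‖(m:ℂ)+e*(u:ℂ)‖ ≤ ‖(m:ℂ)‖ + ‖e*(u:ℂ)‖ := norm_add_le _ _
      _ = |m| + u := by rw [norm_mul, he, Complex.norm_real, Complex.norm_real,
            Real.norm_eq_abs, Real.norm_eq_abs, one_mul, _root_.abs_of_nonneg hu]
      _ ≤ M + u := by linarith
  have hsq : ‖(((m:ℂ)+e*(u:ℂ))^2 - (t:ℂ))‖ ≤ 2*(u^2 + (M^2+|t|)) := by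
    calc ‖(((m:ℂ)+e*(u:ℂ))^2 - (t:ℂ))‖ ≤ ‖((m:ℂ)+e*(u:ℂ))^2‖ + ‖(t:ℂ)‖ := norm_sub_le _ _
      _ = ‖(m:ℂ)+e*(u:ℂ)‖^2 + |t| := by rw [norm_pow, Complex.norm_real, Real.norm_eq_abs]
      _ ≤ (M+u)^2 + |t| := by nlinarith [norm_nonneg ((m:ℂ)+e*(u:ℂ))]
      _ ≤ 2*(u^2 + (M^2+|t|)) := by nlinarith [sq_nonneg (M-u), abs_nonneg t]
  have hexp : Real.exp (Ebd m t u) ≤ Real.exp (M^3/3 + |t| *M) *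
      Real.exp (((M^2+|t|)/2)*u + (M/2)*u^2 - u^3/3) := by
    rw [← Real.exp_add]
    exact Real.exp_le_exp.2 (Ebd_le M t m u hm hu)
  calc ‖e * ((((m:ℂ)+e*(u:ℂ))^2 - (t:ℂ)) * fA t ((m:ℂ)+e*(u:ℂ)))‖
      = ‖(((m:ℂ)+e*(u:ℂ))^2 - (t:ℂ))‖ * Real.exp (Ebd m t u) := by
        rw [norm_mul, he, one_mul, norm_mul, hre]
    _ ≤ (2*(u^2 + (M^2+|t|))) * (Real.exp (M^3/3 + |t| *M) *
          Real.exp (((M^2+|t|)/2)*u + (M/2)*u^2 - u^3/3)) := by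
        exact mul_le_mul hsq hexp (Real.exp_pos _).le (by positivity)
    _ = 2 * Real.exp (M^3/3 + |t| *M) *
          ((u^2 + (M^2+|t|)) * Real.exp (((M^2+|t|)/2)*u + (M/2)*u^2 - u^3/3)) := by ring
    _ ≤ 2 * Real.exp (M^3/3 + |t| *M) * (C * Real.exp (-u)) :=
        mul_le_mul_of_nonneg_left (hC u hu) (by positivity)
    _ = 2 * Real.exp (M^3/3 + |t| *M) * C * Real.exp (-u) := by ring

lemma gker'_bound (t m₀ : ℝ) : ∃ C > (0:ℝ), ∀ m u : ℝ, |m| ≤ |m₀|+1 → 0 ≤ u →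
    ‖gker' t m u‖ ≤ C * Real.exp (-u) := by
  obtain ⟨C1, hC10, hC1⟩ := term'_bound t m₀ eP normeP (fun m u => norm_fA_P t m u)
  obtain ⟨C2, hC20, hC2⟩ := term'_bound t m₀ eM normeM (fun m u => norm_fA_M t m u)
  refine ⟨C1 + C2, by positivity, fun m u hm hu => ?_⟩
  calc ‖gker' t m u‖ ≤ _ + _ := norm_sub_le _ _
    _ ≤ C1 * Real.exp (-u) + C2 * Real.exp (-u) := add_le_add (hC1 m u hm hu) (hC2 m u hm hu)
    _ = (C1 + C2) * Real.exp (-u) := by ring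

lemma term'_integrable (t m : ℝ) (e : ℂ) (he : e = eP ∨ e = eM) :
    IntegrableOn (fun u : ℝ => e * ((((m:ℂ)+e*(u:ℂ))^2 - (t:ℂ)) * fA t ((m:ℂ)+e*(u:ℂ))))
      (Ioi (0:ℝ)) := by
  obtain ⟨C, hC0, hC⟩ := term'_bound t m e
    (by rcases he with h | h <;> rw [h] <;> [exact normeP; exact normeM])
    (by rcases he with h | h <;> rw [h] <;> intro m u <;>
      [exact norm_fA_P t m u; exact norm_fA_M t m u])
  refine Integrable.mono' (expneg_integrableOn.const_mul C) ?_ ?_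
  · apply Continuous.aestronglyMeasurable
    unfold fA; fun_prop
  · filter_upwards [ae_restrict_mem measurableSet_Ioi] with u hu
    exact hC m u (by linarith) hu.le

lemma tendsto_term_zero (t m : ℝ) (e : ℂ)
    (hre : ∀ u : ℝ, ‖fA t ((m:ℂ)+e*(u:ℂ))‖ = Real.exp (Ebd m t u)) :
    Filter.Tendsto (fun u : ℝ => fA t ((m:ℂ)+e*(u:ℂ))) Filter.atTop (nhds 0) := by
  obtain ⟨C, hC0, hC⟩ := expBound ((m^2-t)/2) (-(m/2))
  apply squeeze_zero_norm' (a := fun u => Real.exp (m^3/3 - t*m) * (C * Real.exp (-u)))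
  · filter_upwards [Filter.eventually_ge_atTop (0:ℝ)] with u hu
    rw [hre u, Ebd_eq, Real.exp_add]
    exact mul_le_mul_of_nonneg_left (hC u hu) (Real.exp_pos _).le
  · rw [show (0:ℝ) = Real.exp (m^3/3 - t*m) * (C * 0) by ring]
    exact ((Real.tendsto_exp_neg_atTop_nhds_zero.const_mul C).const_mul _)

lemma integral_term' (t m : ℝ) (e : ℂ) (he : e = eP ∨ e = eM) :
    ∫ u in Ioi (0:ℝ), e * ((((m:ℂ)+e*(u:ℂ))^2 - (t:ℂ)) * fA t ((m:ℂ)+e*(u:ℂ))) = - fA t (m:ℂ) := by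
  have hre : ∀ u : ℝ, ‖fA t ((m:ℂ)+e*(u:ℂ))‖ = Real.exp (Ebd m t u) := by
    rcases he with h | h <;> rw [h] <;> intro u <;>
      [exact norm_fA_P t m u; exact norm_fA_M t m u]
  have hcont : Continuous (fun u : ℝ => fA t ((m:ℂ)+e*(u:ℂ))) := by
    unfold fA; fun_prop
  have key := integral_Ioi_of_hasDerivAt_of_tendsto (a := (0:ℝ))
    (f := fun u : ℝ => fA t ((m:ℂ)+e*(u:ℂ)))
    (f' := fun u : ℝ => e * ((((m:ℂ)+e*(u:ℂ))^2 - (t:ℂ)) * fA t ((m:ℂ)+e*(u:ℂ))))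
    hcont.continuousWithinAt (fun u _ => hasDerivAt_term_u t m e u)
    (term'_integrable t m e he) (tendsto_term_zero t m e hre)
  rw [key]
  norm_num

lemma integral_gker'_zero (t m : ℝ) : ∫ u in Ioi (0:ℝ), gker' t m u = 0 := by
  have h : ∀ u : ℝ, gker' t m u =
      (fun u : ℝ => eP * ((((m:ℂ)+eP*(u:ℂ))^2 - (t:ℂ)) * fA t ((m:ℂ)+eP*(u:ℂ)))) u
      - (fun u : ℝ => eM * ((((m:ℂ)+eM*(u:ℂ))^2 - (t:ℂ)) * fA t ((m:ℂ)+eM*(u:ℂ)))) u :=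
    fun u => rfl
  rw [integral_congr_ae (Filter.Eventually.of_forall h),
    integral_sub (term'_integrable t m eP (Or.inl rfl)) (term'_integrable t m eM (Or.inr rfl)),
    integral_term' t m eP (Or.inl rfl), integral_term' t m eM (Or.inr rfl)]
  ring

lemma Fc_hasDeriv (t m₀ : ℝ) : HasDerivAt (fun m => Fc t m) 0 m₀ := by
  obtain ⟨C, hC0, hC⟩ := gker'_bound t m₀
  have key := hasDerivAt_integral_of_dominated_loc_of_deriv_le (μ := volume.restrict (Ioi 0))
    (F := fun m u => gker t m u) (F' := fun m u => gker' t m u)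
    (x₀ := m₀) (s := Metric.ball m₀ 1) (bound := fun u => C * Real.exp (-u)) (Metric.ball_mem_nhds m₀ one_pos)
    (Filter.Eventually.of_forall fun m => (continuous_gker t m).aestronglyMeasurable)
    (gker_integrable t m₀)
    (continuous_gker' t m₀).aestronglyMeasurable
    ?_ (expneg_integrableOn.const_mul C) ?_
  · have h2 := key.2
    rw [integral_gker'_zero t m₀] at h2
    have h3 := h2.const_mul ((2*(Real.pi:ℂ)*Complex.I)⁻¹)
    simpa [Fc] using h3
  · filter_upwards [ae_restrict_mem measurableSet_Ioi] with u hu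
    intro m hm
    have : |m| ≤ |m₀| + 1 := by
      rw [Metric.mem_ball, Real.dist_eq] at hm
      have := abs_sub_abs_le_abs_sub m m₀
      linarith
    exact hC m u this hu.le
  · filter_upwards with u
    intro m hm
    exact hasDerivAt_gker_m t u m
lemma Fc_const (t m : ℝ) : Fc t m = Fc t 0 :=
  is_const_of_deriv_eq_zero (fun m => (Fc_hasDeriv t m).differentiableAt)
    (fun m => (Fc_hasDeriv t m).deriv) m 0

lemma Ai_eq (t : ℝ) : Ai t = Fc t 0 := by
  rw [Ai, Fc]
  congr 1
  apply integral_congr_ae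
  filter_upwards with u
  rw [gker, fA, fA]
  congr 2
  · push_cast
    rw [show ((0:ℂ)+eP*(u:ℂ))^3 = eP^3*(u:ℂ)^3 by ring, eP_cube]
    ring
  · push_cast
    rw [show ((0:ℂ)+eM*(u:ℂ))^3 = eM^3*(u:ℂ)^3 by ring, eM_cube]
    ring

lemma norm_piInv : ‖(2*(Real.pi:ℂ)*Complex.I)⁻¹‖ = (2*Real.pi)⁻¹ := by
  rw [norm_inv, norm_mul, norm_mul, Complex.norm_I, Complex.norm_real, Real.norm_eq_abs,
    _root_.abs_of_pos Real.pi_pos]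
  norm_num

lemma Ai_bound (σ b : ℝ) : ∃ C₁ > (0:ℝ), ∀ τ t : ℝ, 1 ≤ τ → τ^2 + (σ - b) ≤ t →
    ‖Ai t‖ ≤ C₁ * Real.exp (τ^3/3 - t*τ) := by
  set d := (b-σ)/2 with hd
  have hIntg : IntegrableOn (fun u : ℝ => Real.exp (d*u - u^2/2)) (Ioi (0:ℝ)) := by
    refine Integrable.mono'
      (((integrable_exp_neg_mul_sq (show (0:ℝ) < 1/4 by norm_num)).integrableOn).const_mul
        (Real.exp (d^2))) (Continuous.aestronglyMeasurable (by continuity)) ?_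
    filter_upwards with u
    rw [Real.norm_eq_abs, Real.abs_exp, ← Real.exp_add]
    exact Real.exp_le_exp.2 (by nlinarith [sq_nonneg (d - u/2)])
  set C₀ := ∫ u in Ioi (0:ℝ), Real.exp (d*u - u^2/2) with hC₀def
  have hC₀ : 0 ≤ C₀ := integral_nonneg fun u => (Real.exp_pos _).le
  refine ⟨Real.pi⁻¹ * C₀ + 1, by positivity, fun τ t hτ ht => ?_⟩
  have hAi : Ai t = Fc t τ := by rw [Ai_eq, Fc_const t τ]
  have hmono : (∫ u in Ioi (0:ℝ), ‖gker t τ u‖) ≤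
      ∫ u in Ioi (0:ℝ), 2 * Real.exp (τ^3/3 - t*τ) * Real.exp (d*u - u^2/2) := by
    refine integral_mono_of_nonneg (Filter.Eventually.of_forall fun u => norm_nonneg _)
      (hIntg.const_mul _) ?_
    filter_upwards [ae_restrict_mem measurableSet_Ioi] with u hu
    have hu0 : (0:ℝ) ≤ u := hu.le
    refine (norm_gker_le t τ u).trans ?_
    rw [mul_assoc, ← Real.exp_add]
    refine mul_le_mul_of_nonneg_left (Real.exp_le_exp.2 ?_) (by norm_num)
    have e1 : (τ^2 - t)*u ≤ (b-σ)*u := mul_le_mul_of_nonneg_right (by linarith) hu0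
    have e2 : u^2 ≤ τ*u^2 := by nlinarith
    have e3 : (0:ℝ) ≤ u^3 := by positivity
    rw [Ebd]; nlinarith
  have hval : (∫ u in Ioi (0:ℝ), 2 * Real.exp (τ^3/3 - t*τ) * Real.exp (d*u - u^2/2))
      = 2 * Real.exp (τ^3/3 - t*τ) * C₀ := by
    rw [hC₀def, MeasureTheory.integral_const_mul]
  calc ‖Ai t‖ = ‖(2*(Real.pi:ℂ)*Complex.I)⁻¹‖ * ‖∫ u in Ioi (0:ℝ), gker t τ u‖ := by
        rw [hAi, Fc, norm_mul]
    _ ≤ (2*Real.pi)⁻¹ * (2 * Real.exp (τ^3/3 - t*τ) * C₀) := by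
        rw [norm_piInv]
        refine mul_le_mul_of_nonneg_left ?_ (by positivity)
        exact (norm_integral_le_integral_norm _).trans (hmono.trans_eq hval)
    _ = (Real.pi⁻¹ * C₀) * Real.exp (τ^3/3 - t*τ) := by
        field_simp
    _ ≤ (Real.pi⁻¹ * C₀ + 1) * Real.exp (τ^3/3 - t*τ) := by
        exact mul_le_mul_of_nonneg_right (by linarith) (Real.exp_pos _).le


/-- The kernel `K_Ai^{(τ,−τ)}(σ−x, σ−y)
  = e^{τ(y−x)} ∫₀^∞ Ai(σ−x+τ²+2^{1/3}u) Ai(σ−y+τ²+2^{1/3}u) du`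
tends to zero uniformly on compact sets as `τ → +∞`: for fixed `a ≤ b` and `σ`, there is
`C > 0` such that for all `τ ≥ 1` and all `x, y ∈ [a,b]` the kernel is bounded by `C/√τ`. -/
theorem airyKernelTau_uniform_decay (a b σ : ℝ) (hab : a ≤ b) :
    ∃ C > (0 : ℝ), ∀ τ : ℝ, 1 ≤ τ → ∀ x ∈ Icc a b, ∀ y ∈ Icc a b,
      ‖Complex.exp ((τ * (y - x) : ℝ)) *
          ∫ u in Ioi (0 : ℝ),
            Ai (σ - x + τ ^ 2 + (2 : ℝ) ^ ((1 : ℝ) / 3) * u) *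
              Ai (σ - y + τ ^ 2 + (2 : ℝ) ^ ((1 : ℝ) / 3) * u)‖ ≤
        C / Real.sqrt τ := by
  obtain ⟨C₁, hC₁0, hC₁⟩ := Ai_bound σ b
  refine ⟨3 * C₁^2 * Real.exp ((b-σ)^2) + 1, by positivity, fun τ hτ x hx y hy => ?_⟩
  have hτ0 : (0:ℝ) < τ := lt_of_lt_of_le one_pos hτ
  set c := (2:ℝ)^((1:ℝ)/3) with hcdef
  have hc : 1 ≤ c := Real.one_le_rpow (by norm_num) (by norm_num)
  set X := σ - x + τ^2 with hX
  set Y := σ - y + τ^2 with hY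
  set K := C₁^2 * Real.exp (2*τ^3/3 - (X+Y)*τ) with hK
  have habd : ∀ᵐ u ∂(volume.restrict (Ioi (0:ℝ))),
      ‖Ai (X + c*u) * Ai (Y + c*u)‖ ≤ K * Real.exp (-u) := by
    filter_upwards [ae_restrict_mem measurableSet_Ioi] with u hu
    have hu0 : (0:ℝ) ≤ u := hu.le
    have hcu : 0 ≤ c*u := by positivity
    have h1 : ‖Ai (X + c*u)‖ ≤ C₁ * Real.exp (τ^3/3 - (X + c*u)*τ) := by
      refine hC₁ τ _ hτ ?_
      rw [hX]; have := hx.2; linarith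
    have h2 : ‖Ai (Y + c*u)‖ ≤ C₁ * Real.exp (τ^3/3 - (Y + c*u)*τ) := by
      refine hC₁ τ _ hτ ?_
      rw [hY]; have := hy.2; linarith
    calc ‖Ai (X + c*u) * Ai (Y + c*u)‖ = ‖Ai (X + c*u)‖ * ‖Ai (Y + c*u)‖ := norm_mul _ _
      _ ≤ (C₁ * Real.exp (τ^3/3 - (X + c*u)*τ)) * (C₁ * Real.exp (τ^3/3 - (Y + c*u)*τ)) :=
          mul_le_mul h1 h2 (norm_nonneg _) (by positivity)
      _ = K * Real.exp (-(2*c*u*τ)) := by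
          have hsum : (τ^3/3 - (X + c*u)*τ) + (τ^3/3 - (Y + c*u)*τ)
              = (2*τ^3/3 - (X+Y)*τ) + (-(2*c*u*τ)) := by ring
          rw [hK, mul_mul_mul_comm, ← Real.exp_add, hsum, Real.exp_add, ← mul_assoc, ← pow_two]
      _ ≤ K * Real.exp (-u) := by
          refine mul_le_mul_of_nonneg_left (Real.exp_le_exp.2 ?_) (by positivity)
          have : u ≤ 2*c*u*τ := by nlinarith
          linarith
  have hIntKexp : IntegrableOn (fun u : ℝ => K * Real.exp (-u)) (Ioi (0:ℝ)) :=
    expneg_integrableOn.const_mul K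
  have hIK : ‖∫ u in Ioi (0:ℝ), Ai (X + c*u) * Ai (Y + c*u)‖ ≤ K := by
    refine (norm_integral_le_integral_norm _).trans ?_
    refine le_trans (integral_mono_of_nonneg
      (Filter.Eventually.of_forall fun u => norm_nonneg _) hIntKexp habd) ?_
    rw [MeasureTheory.integral_const_mul, integral_exp_neg_Ioi_zero, mul_one]
  have hnormexp : ‖Complex.exp (((τ * (y - x) : ℝ) : ℂ))‖ = Real.exp (τ*(y-x)) := by
    rw [Complex.norm_exp, Complex.ofReal_re]
  calc ‖Complex.exp (((τ * (y - x) : ℝ) : ℂ)) * ∫ u in Ioi (0:ℝ),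
          Ai (X + c*u) * Ai (Y + c*u)‖
      = Real.exp (τ*(y-x)) * ‖∫ u in Ioi (0:ℝ), Ai (X + c*u) * Ai (Y + c*u)‖ := by
        rw [norm_mul, hnormexp]
    _ ≤ Real.exp (τ*(y-x)) * K := mul_le_mul_of_nonneg_left hIK (Real.exp_pos _).le
    _ = C₁^2 * Real.exp (2*τ*(y-σ) - 4*τ^3/3) := by
        rw [hK, hX, hY, ← mul_assoc, mul_comm (Real.exp _) (C₁^2), mul_assoc, ← Real.exp_add]
        congr 2
        ring
    _ ≤ C₁^2 * Real.exp ((b-σ)^2 - τ/3) := by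
        refine mul_le_mul_of_nonneg_left (Real.exp_le_exp.2 ?_) (by positivity)
        have hyb : y ≤ b := hy.2
        have e1 : 2*τ*(y-σ) ≤ 2*τ*(b-σ) := by nlinarith
        have e2 : 2*τ*(b-σ) ≤ τ^2 + (b-σ)^2 := by nlinarith [sq_nonneg (τ-(b-σ))]
        have e3 : τ^2 + τ/3 ≤ 4*τ^3/3 := by nlinarith [sq_nonneg (τ-1), mul_pos hτ0 hτ0]
        linarith
    _ = C₁^2 * Real.exp ((b-σ)^2) * Real.exp (-(τ/3)) := by
        rw [mul_assoc, ← Real.exp_add]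
        ring_nf
    _ ≤ C₁^2 * Real.exp ((b-σ)^2) * (3 / Real.sqrt τ) := by
        refine mul_le_mul_of_nonneg_left ?_ (by positivity)
        have hτs : (0:ℝ) < Real.sqrt τ := Real.sqrt_pos.2 hτ0
        rw [le_div_iff₀ hτs]
        have hsle : Real.sqrt τ ≤ τ := by
          have h := Real.sqrt_le_sqrt (show τ ≤ τ^2 by nlinarith)
          rwa [Real.sqrt_sq hτ0.le] at h
        have hkey : τ ≤ 3 * Real.exp (τ/3) := by
          have := Real.add_one_le_exp (τ/3)
          linarith
        calc Real.exp (-(τ/3)) * Real.sqrt τ ≤ Real.exp (-(τ/3)) * (3 * Real.exp (τ/3)) := by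
              refine mul_le_mul_of_nonneg_left (hsle.trans hkey) (Real.exp_pos _).le
          _ = 3 := by rw [← mul_assoc, mul_comm (Real.exp _) (3:ℝ), mul_assoc, ← Real.exp_add]
                      simp
    _ ≤ (3 * C₁^2 * Real.exp ((b-σ)^2) + 1) / Real.sqrt τ := by
        have hsq : (0:ℝ) < Real.sqrt τ := Real.sqrt_pos.2 hτ0
        rw [← mul_div_assoc, div_le_div_iff_of_pos_right hsq]
        nlinarith [Real.exp_pos ((b-σ)^2)]
end
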